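/- For sl_2 and N ≥ 1: the set S(1^N) (the case k = 1, j = 0) consists of N-tuples (i_0,…,i_{N−1}) of nonnegative integers with ∑_{p=0}^{N−1}(N!/(N−p))·i_p ≤ N! − ∑_{ℓ=0}^{N−4}(N!/(N−ℓ)!)(N−ℓ−2)!·b_ℓ (with b_ℓ the residues from the congruence recursion with j = 0), and |S(1^N)| = 2^N. Moreover for N = 4, the tuple (0,3,0,0) (corresponding to f_1^3) belongs to S(1^4): indeed 8·3 = 24 ≤ 24 − 2b_0 with b_0 = 0 since i_0 = 0 ≡ 0 mod 4. -/

import Mathlib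

/-- The auxiliary residues `b_ℓ` from the congruence recursion defining
`S(k^{N−j},(k+1)^j)`: `0 ≤ b_ℓ < N − ℓ`, `i_0 − j ≡ b_0 (mod N)` and
`i_ℓ + (b_{ℓ−1} mod (N−ℓ)) ≡ b_ℓ (mod (N−ℓ))`. -/
def bres (N j : ℕ) (i : ℕ → ℕ) : ℕ → ℕ
  | 0 => (((i 0 : ℤ) - (j : ℤ)) % (N : ℤ)).toNat
  | ℓ + 1 => (i (ℓ + 1) + bres N j i ℓ % (N - (ℓ + 1))) % (N - (ℓ + 1))

/-- The set `S(k^{N−j},(k+1)^j)` of `N`-tuples `(i_0,…,i_{N−1})` of nonnegative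
integers satisfying
`∑_{p=0}^{N−1} (N!/(N−p))·i_p ≤ N!·k − ∑_{ℓ=0}^{N−4} (N!/(N−ℓ)!)·(N−ℓ−2)!·b_ℓ + j·(N−1)!`. -/
def Sset (N j k : ℕ) : Set (Fin N → ℕ) :=
  {x | ∀ i : ℕ → ℕ, (∀ p : Fin N, i p = x p) → (∀ p, N ≤ p → i p = 0) →
    ((∑ p ∈ Finset.range N, (N.factorial / (N - p)) * i p : ℕ) : ℤ) ≤
      (N.factorial * k : ℤ)
        - ∑ ℓ ∈ Finset.range (N - 3),
            ((N.factorial / (N - ℓ).factorial) * (N - ℓ - 2).factorial * bres N j i ℓ : ℕ)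
        + (j * (N - 1).factorial : ℤ)}

namespace SsetAux

def carry (N : ℕ) (i : ℕ → ℕ) : ℕ → ℕ
  | 0 => i 0 / N
  | ℓ + 1 => bres N 0 i ℓ / (N - (ℓ + 1)) + (i (ℓ + 1) + bres N 0 i ℓ % (N - (ℓ + 1))) / (N - (ℓ + 1))

lemma bres_zero (N : ℕ) (i : ℕ → ℕ) : bres N 0 i 0 = i 0 % N := by
  show (((i 0 : ℤ) - ((0:ℕ) : ℤ)) % (N : ℤ)).toNat = i 0 % N
  rw [Nat.cast_zero, sub_zero, ← Int.natCast_mod, Int.toNat_natCast]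

lemma bres_succ (N : ℕ) (i : ℕ → ℕ) (ℓ : ℕ) :
    bres N 0 i (ℓ + 1) = (i (ℓ + 1) + bres N 0 i ℓ % (N - (ℓ + 1))) % (N - (ℓ + 1)) := rfl

lemma bres_lt (N : ℕ) (i : ℕ → ℕ) {ℓ : ℕ} (h : ℓ < N) : bres N 0 i ℓ < N - ℓ := by
  cases ℓ with
  | zero => rw [bres_zero]; simpa using Nat.mod_lt _ (by omega)
  | succ m => rw [bres_succ]; exact Nat.mod_lt _ (by omega)

lemma step_id (N : ℕ) (i : ℕ → ℕ) (ℓ : ℕ) :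
    i (ℓ + 1) + bres N 0 i ℓ
      = (N - (ℓ + 1)) * carry N i (ℓ + 1) + bres N 0 i (ℓ + 1) := by
  have h1 : (N - (ℓ+1)) * (bres N 0 i ℓ / (N - (ℓ+1))) + bres N 0 i ℓ % (N - (ℓ+1))
      = bres N 0 i ℓ := Nat.div_add_mod _ _
  have h2 : (N - (ℓ+1)) * ((i (ℓ + 1) + bres N 0 i ℓ % (N - (ℓ+1))) / (N - (ℓ+1)))
        + (i (ℓ + 1) + bres N 0 i ℓ % (N - (ℓ+1))) % (N - (ℓ+1))
      = i (ℓ + 1) + bres N 0 i ℓ % (N - (ℓ+1)) := Nat.div_add_mod _ _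
  rw [carry, bres_succ, Nat.mul_add]
  omega

lemma step_id0 (N : ℕ) (i : ℕ → ℕ) :
    i 0 = N * carry N i 0 + bres N 0 i 0 := by
  rw [carry, bres_zero]
  exact (Nat.div_add_mod _ N).symm

lemma bres_last (N : ℕ) (i : ℕ → ℕ) (hN : 1 ≤ N) : bres N 0 i (N - 1) = 0 := by
  rcases Nat.exists_eq_add_of_le hN with ⟨m, rfl⟩
  cases m with
  | zero => rw [bres_zero]; exact Nat.mod_one _
  | succ k =>
    have : 1 + (k + 1) - 1 = k + 1 := by omega
    rw [this, bres_succ, show 1 + (k+1) - (k+1) = 1 by omega]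
    exact Nat.mod_one _

end SsetAux

open Finset

namespace SsetAux2

/-- coefficient of `i p` -/
def cc (N p : ℕ) : ℕ := N.factorial / (N - p)
/-- coefficient of `bres p` in the penalty -/
def dd (N p : ℕ) : ℕ := N.factorial / (N - p).factorial * (N - p - 2).factorial

lemma cc_mul (N p : ℕ) (h : p < N) : cc N p * (N - p) = N.factorial :=
  Nat.div_mul_cancel (Nat.dvd_factorial (by omega) (by omega))

lemma key_facts (N p : ℕ) (h : p + 1 < N) :
    cc N p + dd N p = cc N (p + 1) ∧ dd N p * (N - p - 1) = cc N p := by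
  obtain ⟨m, hm⟩ : ∃ m, N - p = m + 2 := ⟨N - p - 2, by omega⟩
  obtain ⟨K, hK⟩ : (N - p).factorial ∣ N.factorial :=
    Nat.factorial_dvd_factorial (by omega)
  have hsub1 : N - (p + 1) = m + 1 := by omega
  have hfac : N.factorial = (m + 2).factorial * K := by rw [← hm, hK]
  have e1 : cc N p = (m + 1).factorial * K := by
    rw [cc, hm, hfac, Nat.factorial_succ (m+1), Nat.mul_assoc,
      Nat.mul_div_cancel_left _ (by omega : 0 < m + 2)]
  have e2 : dd N p = K * m.factorial := by
    rw [dd, hm, hfac, Nat.mul_div_cancel_left _ (Nat.factorial_pos _),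
      show m + 2 - 2 = m by omega]
  have e3 : cc N (p + 1) = (m + 2) * m.factorial * K := by
    rw [cc, hsub1, hfac, Nat.factorial_succ (m+1), Nat.factorial_succ m]
    rw [show (m+2) * ((m+1) * m.factorial) * K = (m+1) * ((m+2) * m.factorial * K) by ring,
      Nat.mul_div_cancel_left _ (by omega : 0 < m + 1)]
  constructor
  · rw [e1, e2, e3, Nat.factorial_succ m]; ring
  · rw [e2, e1, show N - p - 1 = m + 1 by omega, Nat.factorial_succ m]; ring

/-- The main telescoping identity. -/
lemma main_id (N : ℕ) (i : ℕ → ℕ) :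
    ∀ L, L < N →
      ∑ p ∈ range (L + 1), cc N p * i p + ∑ p ∈ range L, dd N p * bres N 0 i p
        = N.factorial * ∑ ℓ ∈ range (L + 1), SsetAux.carry N i ℓ + cc N L * bres N 0 i L := by
  intro L
  induction L with
  | zero =>
    intro h
    simp only [range_one, sum_singleton, range_zero, sum_empty, add_zero]
    have h0 := SsetAux.step_id0 N i
    have hc : cc N 0 * N = N.factorial := by
      have := cc_mul N 0 h; simpa using this
    calc cc N 0 * i 0 = cc N 0 * (N * SsetAux.carry N i 0 + bres N 0 i 0) := by rw [← h0]
      _ = N.factorial * SsetAux.carry N i 0 + cc N 0 * bres N 0 i 0 := by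
          rw [Nat.mul_add, ← Nat.mul_assoc]
          rw [show cc N 0 * N = N.factorial from hc]
  | succ L IH =>
    intro h
    have hL : L < N := by omega
    have hkey := key_facts N L h
    have hccM : cc N (L + 1) * (N - (L + 1)) = N.factorial := cc_mul N (L + 1) h
    have hstep := SsetAux.step_id N i L
    rw [sum_range_succ (fun p => cc N p * i p), sum_range_succ (fun p => dd N p * bres N 0 i p),
      sum_range_succ (fun ℓ => SsetAux.carry N i ℓ)]
    rw [show ∑ p ∈ range (L + 1), cc N p * i p + cc N (L+1) * i (L+1)
          + (∑ p ∈ range L, dd N p * bres N 0 i p + dd N L * bres N 0 i L)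
        = (∑ p ∈ range (L + 1), cc N p * i p + ∑ p ∈ range L, dd N p * bres N 0 i p)
          + (cc N (L+1) * i (L+1) + dd N L * bres N 0 i L) by ring, IH hL]
    have expand : cc N L * bres N 0 i L + (cc N (L+1) * i (L+1) + dd N L * bres N 0 i L)
        = N.factorial * SsetAux.carry N i (L+1) + cc N (L+1) * bres N 0 i (L+1) := by
      have : cc N L * bres N 0 i L + dd N L * bres N 0 i L
          = cc N (L+1) * bres N 0 i L := by rw [← Nat.add_mul, hkey.1]
      rw [show cc N L * bres N 0 i L + (cc N (L+1) * i (L+1) + dd N L * bres N 0 i L)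
            = (cc N L * bres N 0 i L + dd N L * bres N 0 i L) + cc N (L+1) * i (L+1) by ring,
        this, ← Nat.mul_add, Nat.add_comm (bres N 0 i L) (i (L+1)), hstep, Nat.mul_add,
        ← Nat.mul_assoc, Nat.mul_comm (cc N (L+1)) (N - (L+1)), Nat.mul_comm (N - (L+1)) (cc N (L+1)), hccM]
    rw [Nat.mul_add N.factorial]
    omega

end SsetAux2

namespace SsetAux2
open Finset

lemma global_id (N : ℕ) (hN : 1 ≤ N) (i : ℕ → ℕ) :
    ∑ p ∈ range N, cc N p * i p + ∑ p ∈ range (N - 1), dd N p * bres N 0 i p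
      = N.factorial * ∑ ℓ ∈ range N, SsetAux.carry N i ℓ := by
  have h := main_id N i (N - 1) (by omega)
  rw [show N - 1 + 1 = N by omega] at h
  rw [h, SsetAux.bres_last N i hN, Nat.mul_zero, Nat.add_zero]

lemma penalty_split (N : ℕ) (f : ℕ → ℕ) :
    ∑ p ∈ range (N - 1), f p
      = ∑ p ∈ range (N - 3), f p + ∑ p ∈ Ico (N - 3) (N - 1), f p := by
  simp only [range_eq_Ico]
  exact (Finset.sum_Ico_consecutive f (by omega : 0 ≤ N - 3) (by omega : N - 3 ≤ N - 1)).symm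

lemma tail_lt (N : ℕ) (hN : 1 ≤ N) (i : ℕ → ℕ) :
    ∑ p ∈ Ico (N - 3) (N - 1), dd N p * bres N 0 i p < N.factorial := by
  have hbound : ∀ p ∈ Ico (N - 3) (N - 1), dd N p * bres N 0 i p ≤ cc N p := by
    intro p hp
    rw [mem_Ico] at hp
    have hp1 : p + 1 < N := by omega
    have hb : bres N 0 i p ≤ N - p - 1 := by
      have := SsetAux.bres_lt N i (show p < N by omega); omega
    calc dd N p * bres N 0 i p ≤ dd N p * (N - p - 1) := Nat.mul_le_mul_left _ hb
      _ = cc N p := (key_facts N p hp1).2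
  have hsum : ∑ p ∈ Ico (N - 3) (N - 1), dd N p * bres N 0 i p
      ≤ ∑ p ∈ Ico (N - 3) (N - 1), cc N p := Finset.sum_le_sum hbound
  rcases (show N = 1 ∨ N = 2 ∨ 3 ≤ N by omega) with h1 | h2 | h3
  · subst h1; simpa using Nat.one_pos
  · subst h2
    refine lt_of_le_of_lt hsum ?_
    norm_num [cc]
  · refine lt_of_le_of_lt hsum ?_
    rw [Finset.sum_Ico_eq_sum_range, show N - 1 - (N - 3) = 2 by omega]
    rw [Finset.sum_range_succ, Finset.sum_range_one]
    have e0 : N - (N - 3 + 0) = 3 := by omega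
    have e1 : N - (N - 3 + 1) = 2 := by omega
    have h6 : (6 : ℕ) ∣ N.factorial := by
      have h := Nat.factorial_dvd_factorial h3
      simpa [show Nat.factorial 3 = 6 from rfl] using h
    obtain ⟨m, hm⟩ := h6
    have hmpos : 1 ≤ m := by
      rcases Nat.eq_zero_or_pos m with h | h
      · exfalso; have := Nat.factorial_pos N; omega
      · exact h
    rw [cc, cc, e0, e1, hm]
    rw [show 6 * m = 3 * (2 * m) by ring, Nat.mul_div_cancel_left _ (by norm_num : 0 < 3),
      show 3 * (2 * m) = 2 * (3 * m) by ring, Nat.mul_div_cancel_left _ (by norm_num : 0 < 2)]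
    omega

lemma ineq_iff_G (N : ℕ) (hN : 1 ≤ N) (i : ℕ → ℕ) :
    (∑ p ∈ range N, cc N p * i p + ∑ p ∈ range (N - 3), dd N p * bres N 0 i p
        ≤ N.factorial)
      ↔ ∑ ℓ ∈ range N, SsetAux.carry N i ℓ ≤ 1 := by
  have hglob := global_id N hN i
  rw [penalty_split N (fun p => dd N p * bres N 0 i p)] at hglob
  have htail := tail_lt N hN i
  set G := ∑ ℓ ∈ range N, SsetAux.carry N i ℓ with hG
  constructor
  · intro h
    by_contra hc
    have h2 : 2 ≤ G := by omega
    have : N.factorial * 2 ≤ N.factorial * G := Nat.mul_le_mul_left _ h2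
    omega
  · intro h
    have : N.factorial * G ≤ N.factorial * 1 := Nat.mul_le_mul_left _ h
    omega

end SsetAux2

namespace SsetAux2
open Finset

lemma sigma_id (N : ℕ) (i : ℕ → ℕ) :
    ∀ L, ∑ p ∈ range (L + 1), i p
      = ∑ ℓ ∈ range (L + 1), (N - ℓ) * SsetAux.carry N i ℓ + bres N 0 i L := by
  intro L
  induction L with
  | zero =>
    simp only [zero_add, range_one, sum_singleton, Nat.sub_zero]
    exact SsetAux.step_id0 N i
  | succ L IH =>
    rw [sum_range_succ, IH, sum_range_succ (fun ℓ => (N - ℓ) * SsetAux.carry N i ℓ) (L + 1)]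
    have := SsetAux.step_id N i L
    omega

lemma total_id (N : ℕ) (hN : 1 ≤ N) (i : ℕ → ℕ) :
    ∑ p ∈ range N, i p = ∑ ℓ ∈ range N, (N - ℓ) * SsetAux.carry N i ℓ := by
  have h := sigma_id N i (N - 1)
  rw [show N - 1 + 1 = N by omega, SsetAux.bres_last N i hN, Nat.add_zero] at h
  exact h

lemma telescope (N : ℕ) (i : ℕ → ℕ) (hN : 1 ≤ N) :
    ∀ k a, a + k = N - 1 → (∀ ℓ, a < ℓ → ℓ < N → SsetAux.carry N i ℓ = 0) →
      bres N 0 i a + ∑ ℓ ∈ Ico (a + 1) N, i ℓ = 0 := by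
  intro k
  induction k with
  | zero =>
    intro a ha _
    rw [show a = N - 1 by omega, SsetAux.bres_last N i hN,
      show N - 1 + 1 = N by omega, Finset.Ico_self, Finset.sum_empty]
    rfl
  | succ k IH =>
    intro a ha hc
    have IH' := IH (a + 1) (by omega) (fun ℓ h1 h2 => hc ℓ (by omega) h2)
    have hstep := SsetAux.step_id N i a
    rw [hc (a + 1) (by omega) (by omega), Nat.mul_zero, Nat.zero_add] at hstep
    rw [Finset.sum_eq_sum_Ico_succ_bot (show a + 1 < N by omega)]
    omega

/-- `G ≤ 1` implies the simple support condition. -/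
lemma G_imp_simple (N : ℕ) (i : ℕ → ℕ) (hN : 1 ≤ N) (h0 : ∀ p, N ≤ p → i p = 0)
    (hG : ∑ ℓ ∈ range N, SsetAux.carry N i ℓ ≤ 1) :
    ∀ l, i l ≠ 0 → l + ∑ p ∈ range N, i p ≤ N := by
  intro l hl
  have hlN : l < N := by
    by_contra h; exact hl (h0 l (by omega))
  have htot := total_id N hN i
  by_cases hex : ∃ m, l ≤ m ∧ m < N ∧ SsetAux.carry N i m ≠ 0
  · obtain ⟨m, hlm, hmN, hm⟩ := hex
    have hmem : m ∈ range N := mem_range.2 hmN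
    have h1 : SsetAux.carry N i m ≤ ∑ ℓ ∈ range N, SsetAux.carry N i ℓ :=
      Finset.single_le_sum (fun _ _ => Nat.zero_le _) hmem
    have hcm : SsetAux.carry N i m = 1 := by omega
    have hothers : ∀ ℓ ∈ range N, ℓ ≠ m → SsetAux.carry N i ℓ = 0 := by
      intro ℓ hℓ hne
      by_contra h
      have hsub : ({ℓ, m} : Finset ℕ) ⊆ range N := by
        intro x hx; rcases Finset.mem_insert.1 hx with rfl | hx
        · exact hℓ
        · rw [Finset.mem_singleton.1 hx]; exact hmem
      have hle2 : ∑ ℓ ∈ ({ℓ, m} : Finset ℕ), SsetAux.carry N i ℓ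
          ≤ ∑ ℓ ∈ range N, SsetAux.carry N i ℓ := Finset.sum_le_sum_of_subset hsub
      rw [Finset.sum_pair hne] at hle2
      omega
    have hs : ∑ p ∈ range N, i p = (N - m) * SsetAux.carry N i m := by
      rw [htot]
      exact Finset.sum_eq_single_of_mem m hmem
        (fun b hb hne => by rw [hothers b hb hne, Nat.mul_zero])
    rw [hs, hcm, Nat.mul_one]
    omega
  · push_neg at hex
    rcases Nat.eq_zero_or_pos l with rfl | hpos
    · have : ∑ p ∈ range N, i p = 0 := by
        rw [htot]
        exact Finset.sum_eq_zero (fun ℓ hℓ => by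
          rw [hex ℓ (Nat.zero_le _) (mem_range.1 hℓ), Nat.mul_zero])
      omega
    · exfalso
      have ht := telescope N i hN (N - 1 - (l - 1)) (l - 1) (by omega)
        (fun ℓ h1 h2 => hex ℓ (by omega) h2)
      have hmem : l ∈ Ico (l - 1 + 1) N := by
        rw [mem_Ico]; omega
      have : i l = 0 := by
        have hsum : ∑ ℓ ∈ Ico (l - 1 + 1) N, i ℓ = 0 := by omega
        exact (Finset.sum_eq_zero_iff.1 hsum) l hmem
      exact hl this

/-- The simple support condition implies `G ≤ 1`. -/
lemma simple_imp_G (N : ℕ) (i : ℕ → ℕ) (hN : 1 ≤ N) (h0 : ∀ p, N ≤ p → i p = 0)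
    (hsupp : ∀ l, i l ≠ 0 → l + ∑ p ∈ range N, i p ≤ N) :
    ∑ ℓ ∈ range N, SsetAux.carry N i ℓ ≤ 1 := by
  set s := ∑ p ∈ range N, i p with hsdef
  have hzero : ∀ l, N < l + s → i l = 0 := by
    intro l h
    by_contra hcon
    have := hsupp l hcon
    omega
  have hs : s ≤ N := by
    rcases Nat.eq_zero_or_pos s with h | h
    · omega
    · obtain ⟨l, hl, hne⟩ : ∃ l ∈ range N, i l ≠ 0 := by
        by_contra hcon
        push_neg at hcon
        have : s = 0 := Finset.sum_eq_zero hcon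
        omega
      have := hsupp l hne
      omega
  have hσle : ∀ ℓ, ℓ < N → ∑ p ∈ range (ℓ + 1), i p ≤ s := by
    intro ℓ h
    exact Finset.sum_le_sum_of_subset (Finset.range_subset_range.2 (by omega))
  have hσfull : ∀ ℓ, ℓ < N → N ≤ ℓ + s → ∑ p ∈ range (ℓ + 1), i p = s := by
    intro ℓ h hfull
    have hsplit := Finset.sum_range_add_sum_Ico i (show ℓ + 1 ≤ N by omega)
    have hz : ∑ p ∈ Ico (ℓ + 1) N, i p = 0 :=
      Finset.sum_eq_zero (fun p hp => hzero p (by rw [mem_Ico] at hp; omega))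
    omega
  -- the key trichotomy
  have claim : ∀ ℓ, ℓ < N →
      (ℓ + s < N → bres N 0 i ℓ = ∑ p ∈ range (ℓ + 1), i p ∧ SsetAux.carry N i ℓ = 0) ∧
      (ℓ + s = N → bres N 0 i ℓ = 0 ∧ SsetAux.carry N i ℓ = 1) ∧
      (N < ℓ + s → bres N 0 i ℓ = 0 ∧ SsetAux.carry N i ℓ = 0) := by
    intro ℓ
    induction ℓ with
    | zero =>
      intro h
      have hσ0 : ∑ p ∈ range (0 + 1), i p = i 0 := by simp
      refine ⟨?_, ?_, ?_⟩
      · intro hlt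
        have hle := hσle 0 h
        rw [hσ0] at hle
        rw [SsetAux.bres_zero, SsetAux.carry, hσ0]
        exact ⟨Nat.mod_eq_of_lt (by omega), Nat.div_eq_of_lt (by omega)⟩
      · intro heq
        have hfl := hσfull 0 h (by omega)
        rw [hσ0] at hfl
        have : i 0 = N := by omega
        rw [SsetAux.bres_zero, SsetAux.carry, this]
        exact ⟨Nat.mod_self N, Nat.div_self (by omega)⟩
      · intro hgt; omega
    | succ ℓ IH =>
      intro h
      have hℓN : ℓ < N := by omega
      have IH' := IH hℓN
      have hσsucc : ∑ p ∈ range (ℓ + 1 + 1), i p = ∑ p ∈ range (ℓ + 1), i p + i (ℓ + 1) :=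
        sum_range_succ i (ℓ + 1)
      have hM : 1 ≤ N - (ℓ + 1) := by omega
      refine ⟨?_, ?_, ?_⟩
      · intro hlt
        obtain ⟨hb, hc⟩ := IH'.1 (by omega)
        have h1 : ∑ p ∈ range (ℓ + 1), i p ≤ s := hσle ℓ hℓN
        have h2 : ∑ p ∈ range (ℓ + 1 + 1), i p ≤ s := hσle (ℓ + 1) h
        have hsM : s < N - (ℓ + 1) := by omega
        constructor
        · rw [SsetAux.bres_succ, hb, Nat.mod_eq_of_lt (by omega : ∑ p ∈ range (ℓ+1), i p < N - (ℓ+1))]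
          rw [show i (ℓ + 1) + ∑ p ∈ range (ℓ + 1), i p = ∑ p ∈ range (ℓ + 1 + 1), i p by omega]
          exact Nat.mod_eq_of_lt (by omega)
        · rw [SsetAux.carry, hb, Nat.mod_eq_of_lt (by omega : ∑ p ∈ range (ℓ+1), i p < N - (ℓ+1))]
          rw [show i (ℓ + 1) + ∑ p ∈ range (ℓ + 1), i p = ∑ p ∈ range (ℓ + 1 + 1), i p by omega]
          rw [Nat.div_eq_of_lt (by omega), Nat.div_eq_of_lt (by omega)]
      · intro heq
        obtain ⟨hb, hc⟩ := IH'.1 (by omega)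
        have hMs : N - (ℓ + 1) = s := by omega
        have hNle : N ≤ ℓ + 1 + s := by omega
        have hfull : ∑ p ∈ range (ℓ + 1 + 1), i p = s := hσfull (ℓ + 1) h hNle
        have h1 : ∑ p ∈ range (ℓ + 1), i p ≤ s := hσle ℓ hℓN
        rcases Nat.lt_or_ge (∑ p ∈ range (ℓ + 1), i p) s with hlt | hge
        · -- σℓ < s : g-carry
          constructor
          · rw [SsetAux.bres_succ, hb, Nat.mod_eq_of_lt (by omega : ∑ p ∈ range (ℓ+1), i p < N - (ℓ+1)),
              show i (ℓ + 1) + ∑ p ∈ range (ℓ + 1), i p = s by omega, hMs]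
            exact Nat.mod_self s
          · rw [SsetAux.carry, hb, Nat.mod_eq_of_lt (by omega : ∑ p ∈ range (ℓ+1), i p < N - (ℓ+1)),
              show i (ℓ + 1) + ∑ p ∈ range (ℓ + 1), i p = s by omega, hMs]
            rw [Nat.div_eq_of_lt (by omega), Nat.div_self (by omega)]
        · -- σℓ = s : e-carry
          have hσeq : ∑ p ∈ range (ℓ + 1), i p = s := by omega
          have hi0 : i (ℓ + 1) = 0 := by omega
          constructor
          · rw [SsetAux.bres_succ, hb, hσeq, hMs, Nat.mod_self, hi0]
            simp
          · rw [SsetAux.carry, hb, hσeq, hMs, Nat.mod_self, hi0, Nat.div_self (by omega)]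
            simp
      · intro hgt
        have hge : N ≤ ℓ + s := by omega
        have hb0 : bres N 0 i ℓ = 0 := by
          rcases Nat.eq_or_lt_of_le hge with heq | hlt2
          · exact (IH'.2.1 heq.symm).1
          · exact (IH'.2.2 hlt2).1
        have hi0 : i (ℓ + 1) = 0 := hzero (ℓ + 1) (show N < ℓ + 1 + s by omega)
        constructor
        · rw [SsetAux.bres_succ, hb0, hi0]
          simp
        · rw [SsetAux.carry, hb0, hi0]
          simp
  -- conclude
  calc ∑ ℓ ∈ range N, SsetAux.carry N i ℓ
      ≤ ∑ ℓ ∈ range N, (if ℓ + s = N then 1 else 0) := by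
        refine Finset.sum_le_sum (fun ℓ hℓ => ?_)
        have hℓN := mem_range.1 hℓ
        have := claim ℓ hℓN
        rcases Nat.lt_trichotomy (ℓ + s) N with h | h | h
        · rw [if_neg (by omega), (this.1 h).2]
        · rw [if_pos h, (this.2.1 h).2]
        · rw [if_neg (by omega), (this.2.2 h).2]
    _ ≤ 1 := by
        rcases Nat.eq_zero_or_pos s with hs0 | hs1
        · have : ∀ ℓ ∈ range N, (if ℓ + s = N then 1 else 0) = 0 := by
            intro ℓ hℓ
            rw [if_neg (by rw [mem_range] at hℓ; omega)]
          rw [Finset.sum_congr rfl this]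
          simp
        · have : ∀ ℓ ∈ range N, (if ℓ + s = N then (1:ℕ) else 0) = (if ℓ = N - s then 1 else 0) := by
            intro ℓ hℓ
            by_cases hc : ℓ + s = N
            · rw [if_pos hc, if_pos (by omega)]
            · rw [if_neg hc, if_neg (by omega)]
          rw [Finset.sum_congr rfl this, Finset.sum_ite_eq' (range N) (N - s) (fun _ => 1)]
          split <;> omega

end SsetAux2

namespace SsetAux2
open Finset

variable {N : ℕ}

/-- allowed support for total sum `s` -/
def TT (N s : ℕ) : Finset (Fin N) := univ.filter (fun l => (l : ℕ) + s ≤ N)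

lemma mem_TT {s : ℕ} {l : Fin N} : l ∈ TT N s ↔ (l : ℕ) + s ≤ N := by
  simp [TT]

lemma sum_of_mem_piA {s : ℕ} {x : Fin N → ℕ} (hx : x ∈ Finset.piAntidiag (TT N s) s) :
    ∑ p, x p = s := by
  rw [Finset.mem_piAntidiag] at hx
  rw [← hx.1]
  exact (Finset.sum_subset (Finset.subset_univ _) (fun l _ hl => by
    by_contra hne
    exact hl (hx.2 l hne))).symm

lemma card_piA (s : ℕ) (hs1 : 1 ≤ s) (hsN : s ≤ N) :
    (Finset.piAntidiag (TT N s) s).card = N.choose s := by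
  set k := N + 1 - s with hk
  have hkN : k ≤ N := by omega
  have hT : TT N s = Finset.map (Fin.castLEEmb hkN) univ := by
    ext l
    rw [Finset.mem_map]
    simp only [TT, mem_filter, mem_univ, true_and]
    constructor
    · intro h
      exact ⟨⟨(l : ℕ), by omega⟩, by apply Fin.ext; simp⟩
    · rintro ⟨q, rfl⟩
      have := q.2
      simp only [Fin.castLEEmb_apply, Fin.coe_castLE]
      omega
  have e : ↥(Finset.piAntidiag (TT N s) s) ≃ {P : Fin k → ℕ // ∑ q, P q = s} := by
    refine
      { toFun := fun f => ⟨fun q => f.1 (Fin.castLE hkN q), ?_⟩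
        invFun := fun P => ⟨fun l => if h : (l : ℕ) < k then P.1 ⟨l, h⟩ else 0, ?_⟩
        left_inv := ?_
        right_inv := ?_ }
    · have hsum : ∑ x ∈ Finset.map (Fin.castLEEmb hkN) univ, f.1 x = s := by
        rw [← hT]
        exact (Finset.mem_piAntidiag.1 f.2).1
      rw [Finset.sum_map] at hsum
      simpa using hsum
    · rw [Finset.mem_piAntidiag]
      constructor
      · rw [hT, Finset.sum_map]
        have hterm : ∀ q : Fin k, q ∈ (univ : Finset (Fin k)) →
            (if h : (((Fin.castLEEmb hkN) q : Fin N) : ℕ) < k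
              then P.1 ⟨(((Fin.castLEEmb hkN) q : Fin N) : ℕ), h⟩ else 0) = P.1 q := by
          intro q _
          have hq : (((Fin.castLEEmb hkN) q : Fin N) : ℕ) < k := by simpa using q.2
          rw [dif_pos hq]
          exact congrArg P.1 (Fin.ext (by simp))
        rw [Finset.sum_congr rfl hterm]
        exact P.2
      · intro l hl
        rw [hT, Finset.mem_map]
        by_cases h : (l : ℕ) < k
        · exact ⟨⟨(l : ℕ), h⟩, mem_univ _, by ext; simp [Fin.castLE]⟩
        · exact absurd (dif_neg h) hl
    · intro f
      ext l
      simp only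
      by_cases h : (l : ℕ) < k
      · rw [dif_pos h]
        exact congrArg f.1 (Fin.ext (by simp))
      · rw [dif_neg h]
        obtain ⟨-, hsupp⟩ := Finset.mem_piAntidiag.1 f.2
        by_contra hne
        have := mem_TT.1 (hsupp l (fun hzz => hne hzz.symm))
        omega
    · intro P
      ext q
      simp only
      have hq : ((Fin.castLE hkN q : Fin N) : ℕ) < k := by simpa using q.2
      rw [dif_pos hq]
      exact congrArg P.1 (Fin.ext (by simp))
  haveI : Fintype {P : Fin k → ℕ // ∑ q, P q = s} :=
    Fintype.ofEquiv _ (Sym.equivNatSumOfFintype (Fin k) s)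
  rw [← Fintype.card_coe, Fintype.card_congr e,
    ← Fintype.card_congr (Sym.equivNatSumOfFintype (Fin k) s),
    Sym.card_sym_eq_choose, Fintype.card_fin,
    show k + s - 1 = N by omega]

lemma card_piA_zero : (Finset.piAntidiag (TT N 0) 0).card = 1 := by
  have : Finset.piAntidiag (TT N 0) 0 = {0} := by
    ext f
    rw [Finset.mem_piAntidiag, Finset.mem_singleton]
    constructor
    · rintro ⟨hsum, hsupp⟩
      funext l
      by_cases h : l ∈ TT N 0
      · exact (Finset.sum_eq_zero_iff.1 hsum) l h
      · by_contra hne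
        exact h (hsupp l hne)
    · rintro rfl
      exact ⟨Finset.sum_eq_zero (fun _ _ => rfl), fun l hl => absurd rfl hl⟩
  rw [this, Finset.card_singleton]

lemma card_simple (hN : 1 ≤ N) :
    Nat.card {x : Fin N → ℕ | ∀ l : Fin N, x l ≠ 0 → (l : ℕ) + ∑ p, x p ≤ N} = 2 ^ N := by
  classical
  set F : Finset (Fin N → ℕ) :=
    (range (N + 1)).biUnion (fun s => Finset.piAntidiag (TT N s) s) with hF
  have hmem : ∀ x : Fin N → ℕ,
      (x ∈ F ↔ ∀ l : Fin N, x l ≠ 0 → (l : ℕ) + ∑ p, x p ≤ N) := by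
    intro x
    constructor
    · intro hx
      rw [hF, Finset.mem_biUnion] at hx
      obtain ⟨s, -, hx⟩ := hx
      have hsum := sum_of_mem_piA hx
      rw [Finset.mem_piAntidiag] at hx
      intro l hl
      have := mem_TT.1 (hx.2 l hl)
      omega
    · intro hx
      have hsN : ∑ p, x p ≤ N := by
        by_cases h : ∀ p, x p = 0
        · have : ∑ p, x p = 0 := Finset.sum_eq_zero (fun p _ => h p)
          omega
        · push_neg at h
          obtain ⟨l, hl⟩ := h
          have := hx l hl
          omega
      rw [hF, Finset.mem_biUnion]
      refine ⟨∑ p, x p, mem_range.2 (by omega), ?_⟩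
      rw [Finset.mem_piAntidiag]
      refine ⟨?_, fun l hl => mem_TT.2 (hx l hl)⟩
      exact Finset.sum_subset (Finset.subset_univ _) (fun l _ hl => by
        by_contra hne
        exact hl (mem_TT.2 (hx l hne)))
  have hset : {x : Fin N → ℕ | ∀ l : Fin N, x l ≠ 0 → (l : ℕ) + ∑ p, x p ≤ N} = ↑F := by
    ext x
    rw [Finset.mem_coe, hmem x]
    rfl
  rw [hset, Nat.card_coe_set_eq, Set.ncard_coe_finset]
  have hdisj : ∀ s ∈ range (N + 1), ∀ t ∈ range (N + 1), s ≠ t →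
      Disjoint (Finset.piAntidiag (TT N s) s) (Finset.piAntidiag (TT N t) t) := by
    intro s _ t _ hst
    rw [Finset.disjoint_left]
    intro x hx1 hx2
    exact hst ((sum_of_mem_piA hx1).symm.trans (sum_of_mem_piA hx2))
  rw [hF, Finset.card_biUnion hdisj]
  have : ∀ s ∈ range (N + 1), (Finset.piAntidiag (TT N s) s).card = N.choose s := by
    intro s hs
    rcases Nat.eq_zero_or_pos s with rfl | h1
    · rw [card_piA_zero, Nat.choose_zero_right]
    · exact card_piA s h1 (by rw [mem_range] at hs; omega)
  rw [Finset.sum_congr rfl this, Nat.sum_range_choose]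

end SsetAux2


namespace SsetAux2
open Finset

lemma ineq_iff_simple (N : ℕ) (hN : 1 ≤ N) (i : ℕ → ℕ) (h0 : ∀ p, N ≤ p → i p = 0) :
    (((∑ p ∈ range N, N.factorial / (N - p) * i p : ℕ) : ℤ)
        ≤ (N.factorial : ℤ) - ∑ ℓ ∈ range (N - 3),
            ((N.factorial / (N - ℓ).factorial * (N - ℓ - 2).factorial * bres N 0 i ℓ : ℕ) : ℤ))
      ↔ ∀ l, i l ≠ 0 → l + ∑ p ∈ range N, i p ≤ N := by
  have hG := ineq_iff_G N hN i
  simp only [cc, dd] at hG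
  have hcast : ∑ ℓ ∈ range (N - 3),
        ((N.factorial / (N - ℓ).factorial * (N - ℓ - 2).factorial * bres N 0 i ℓ : ℕ) : ℤ)
      = ((∑ ℓ ∈ range (N - 3),
          N.factorial / (N - ℓ).factorial * (N - ℓ - 2).factorial * bres N 0 i ℓ : ℕ) : ℤ) := by
    rw [Nat.cast_sum]
  rw [hcast]
  constructor
  · intro h
    refine G_imp_simple N i hN h0 (hG.1 ?_)
    omega
  · intro h
    have := hG.2 (simple_imp_G N i hN h0 h)
    omega

lemma mem_Sset_iff (N : ℕ) (hN : 1 ≤ N) (x : Fin N → ℕ) :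
    x ∈ Sset N 0 1 ↔ ∀ l : Fin N, x l ≠ 0 → (l : ℕ) + ∑ p, x p ≤ N := by
  simp only [Sset, Set.mem_setOf_eq]
  constructor
  · intro h l hl
    set i : ℕ → ℕ := fun p => if hp : p < N then x ⟨p, hp⟩ else 0 with hi
    have hag : ∀ p : Fin N, i p = x p := by
      intro p
      simp only [hi, dif_pos p.isLt]
    have h0 : ∀ p, N ≤ p → i p = 0 := by
      intro p hp
      simp only [hi, dif_neg (by omega : ¬ p < N)]
    have hineq := h i hag h0
    simp only [Nat.cast_one, Nat.cast_zero, mul_one, zero_mul, add_zero, Nat.cast_ofNat] at hineq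
    have hsimple := (ineq_iff_simple N hN i h0).1 (by exact_mod_cast hineq)
    have hsum : ∑ p ∈ range N, i p = ∑ p, x p := by
      rw [← Fin.sum_univ_eq_sum_range]
      exact Finset.sum_congr rfl (fun p _ => hag p)
    have hil : i (l : ℕ) ≠ 0 := by
      rw [show ((l : ℕ) : ℕ) = ((l : Fin N) : ℕ) from rfl, hag l]
      exact hl
    have := hsimple (l : ℕ) hil
    omega
  · intro hx i hag h0
    have hsum : ∑ p ∈ range N, i p = ∑ p, x p := by
      rw [← Fin.sum_univ_eq_sum_range]
      exact Finset.sum_congr rfl (fun p _ => hag p)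
    have hsimple : ∀ l, i l ≠ 0 → l + ∑ p ∈ range N, i p ≤ N := by
      intro l hl
      have hlN : l < N := by
        by_contra hc
        exact hl (h0 l (by omega))
      have heq : i l = x ⟨l, hlN⟩ := hag ⟨l, hlN⟩
      have := hx ⟨l, hlN⟩ (by rw [← heq]; exact hl)
      rw [hsum]
      simpa using this
    have := (ineq_iff_simple N hN i h0).2 hsimple
    simp only [Nat.cast_one, Nat.cast_zero, mul_one, zero_mul, add_zero]
    exact_mod_cast this

end SsetAux2


/-- For `k = 1`, `j = 0`: `|S(1^N)| = 2^N` (the dimension of the local Weyl module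
`W_loc(N)` for `sl₂`), and for `N = 4` the tuple `(0,3,0,0)` (the monomial `f_1³`)
belongs to `S(1⁴)`. -/
theorem Sset_one_pow (N : ℕ) (hN : 1 ≤ N) :
    Nat.card (Sset N 0 1) = 2 ^ N ∧
    (fun p : Fin 4 => if p = 1 then 3 else 0) ∈ Sset 4 0 1 := by
  constructor
  · have hset : Sset N 0 1
        = {x : Fin N → ℕ | ∀ l : Fin N, x l ≠ 0 → (l : ℕ) + ∑ p, x p ≤ N} :=
      Set.ext (fun x => SsetAux2.mem_Sset_iff N hN x)
    rw [hset]
    exact SsetAux2.card_simple hN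
  · rw [SsetAux2.mem_Sset_iff 4 (by norm_num)]
    decide
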